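/- arXiv:math/9908153 — 2 statements merged into one kernel-verified Lean document; each statement's English description precedes it below -/
import Mathlib

section
/- The assignment Σ_{w∈W} r_w T_w ↦ Σ_{w∈W} r̄_w (T_{w⁻¹})⁻¹ is a well-defined map from the Hecke algebra H to itself (each basis element T_w is invertible in H), it is a ring endomorphism, and it is an involution (applying it twice is the identity). -/
namespace KLPaper

open Polynomial
open scoped Classical

variable {B : Type*} {W : Type*} [Group W] {M : CoxeterMatrix B}

/-- The Bruhat order on a Coxeter group: generated by right multiplication by
reflections which increases the length. -/
def bruhatLE (cs : CoxeterSystem M W) : W → W → Prop :=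
  Relation.ReflTransGen (fun x y =>
    (∃ t, cs.IsReflection t ∧ y = x * t) ∧ cs.length x < cs.length y)

/-- A commutative ring `R` containing `ℤ[q,q⁻¹]`, with a direct sum decomposition
`R = ⊕_{k ∈ ℤ} R_k` into additive subgroups and an involutive ring endomorphism `conj`
such that `R_i R_j ⊆ R_{i+j}`, `conj R_i = R_{-i}`, `1 ∈ R_0`, `q ∈ R_2`, `conj q = q⁻¹`. -/
structure KLRing (R : Type*) [CommRing R] where
  q : R
  qinv : R
  q_qinv : q * qinv = 1
  grade : ℤ → AddSubgroup R
  decomp : DirectSum.IsInternal grade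
  conj : R →+* R
  conj_conj : ∀ r : R, conj (conj r) = r
  grade_mul : ∀ (i j : ℤ) (r s : R), r ∈ grade i → s ∈ grade j → r * s ∈ grade (i + j)
  conj_grade : ∀ (i : ℤ) (r : R), r ∈ grade i → conj r ∈ grade (-i)
  one_mem : (1 : R) ∈ grade 0
  q_mem : q ∈ grade 2
  conj_q : conj q = qinv
  laurent_inj : Function.Injective fun f : ℤ →₀ ℤ =>
    f.sum fun k c => c • (if 0 ≤ k then q ^ k.toNat else qinv ^ (-k).toNat)

variable {R : Type*} [CommRing R]

/-- The subgroup `R_0 + R_1 + ⋯ + R_{n-1} = ⊕_{i=0}^{n-1} R_i` of `R`. -/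
def KLRing.gradeSum (K : KLRing R) (n : ℕ) : AddSubgroup R :=
  ⨆ i ∈ Finset.range n, K.grade (i : ℤ)

/-- `r` belongs to `ℤ[q] ⊆ R`. -/
def KLRing.InZq (K : KLRing R) (r : R) : Prop :=
  ∃ p : Polynomial ℤ, Polynomial.aeval K.q p = r

/-- The Hecke algebra of `(W, S)` over `R`: the free `R`-module with basis
`{T_w}_{w ∈ W}`, with multiplication determined by `T_{w₁} T_{w₂} = T_{w₁ w₂}`
whenever `ℓ(w₁w₂) = ℓ(w₁) + ℓ(w₂)` and `(T_s + 1)(T_s - q) = 0` for `s ∈ S`. -/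
structure Hecke (cs : CoxeterSystem M W) (R : Type*) [CommRing R] (q : R) where
  carrier : Type*
  [ring : Ring carrier]
  [alg : Algebra R carrier]
  T : W → carrier
  basis : Module.Basis W R carrier
  basis_eq : ∀ w : W, basis w = T w
  T_mul : ∀ w₁ w₂ : W, cs.length (w₁ * w₂) = cs.length w₁ + cs.length w₂ →
    T w₁ * T w₂ = T (w₁ * w₂)
  T_quad : ∀ i : B, (T (cs.simple i) + 1) * (T (cs.simple i) - algebraMap R carrier q) = 0

attribute [instance] Hecke.ring Hecke.alg

variable {cs : CoxeterSystem M W}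

/-- `bar` is the bar involution `Σ r_w T_w ↦ Σ conj(r_w) (T_{w⁻¹})⁻¹` of the Hecke algebra. -/
def IsBar (K : KLRing R) (Hk : Hecke cs R K.q) (bar : Hk.carrier →+* Hk.carrier) : Prop :=
  ∀ (r : R) (w : W), bar (r • Hk.T w) = K.conj r • Ring.inverse (Hk.T w⁻¹)

/-- `j` is the involution `j(Σ r_w T_w) = Σ r_w (-q)^{ℓ(w)} (T_{w⁻¹})⁻¹` of the Hecke algebra. -/
def IsJ (K : KLRing R) (Hk : Hecke cs R K.q) (j : Hk.carrier →ₐ[R] Hk.carrier) : Prop :=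
  ∀ w : W, j (Hk.T w) = (-K.q) ^ cs.length w • Ring.inverse (Hk.T w⁻¹)

/-- `C` is the Kazhdan–Lusztig basis element `C_w`:
`C = Σ_{y ≤ w} P_{y,w} T_y` with `P_{w,w} = 1`,
`P_{y,w} ∈ ⊕_{i=0}^{ℓ(w)-ℓ(y)-1} R_i` for `y < w`, and `bar C = q^{-ℓ(w)} C`.
(The coefficient `P_{y,w}` of `C_w` is `Hk.basis.repr C y`.) -/
def IsKLElt (K : KLRing R) (Hk : Hecke cs R K.q)
    (bar : Hk.carrier →+* Hk.carrier) (w : W) (C : Hk.carrier) : Prop :=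
  Hk.basis.repr C w = 1 ∧
  (∀ y : W, Hk.basis.repr C y ≠ 0 → bruhatLE cs y w) ∧
  (∀ y : W, bruhatLE cs y w → y ≠ w →
    Hk.basis.repr C y ∈ K.gradeSum (cs.length w - cs.length y)) ∧
  bar C = K.qinv ^ cs.length w • C

/-- The standard parabolic subgroup `W_J = ⟨J⟩`. -/
def WJ (cs : CoxeterSystem M W) (J : Set B) : Subgroup W :=
  Subgroup.closure (cs.simple '' J)

/-- `W^J`: the set of minimal length coset representatives of `W/W_J`,
i.e. the `w ∈ W` with `ws > w` for all `s ∈ J`. -/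
def minReps (cs : CoxeterSystem M W) (J : Set B) : Set W :=
  {w | ∀ i ∈ J, cs.length w < cs.length (w * cs.simple i)}

/-- The Hecke algebra `H(W_J)` of the standard parabolic subgroup `W_J`
(with generating set `J`; the length function of `(W_J, J)` is the restriction
of that of `(W, S)`). -/
structure HeckeJ (cs : CoxeterSystem M W) (J : Set B) (R : Type*) [CommRing R] (q : R) where
  carrier : Type*
  [ring : Ring carrier]
  [alg : Algebra R carrier]
  T : WJ cs J → carrier
  basis : Module.Basis (WJ cs J) R carrier
  basis_eq : ∀ x, basis x = T x
  T_mul : ∀ x₁ x₂ : WJ cs J,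
    cs.length ((x₁ : W) * (x₂ : W)) = cs.length (x₁ : W) + cs.length (x₂ : W) →
    T x₁ * T x₂ = T (x₁ * x₂)
  T_quad : ∀ (i : B) (hi : i ∈ J),
    (T ⟨cs.simple i, Subgroup.subset_closure ⟨i, hi, rfl⟩⟩ + 1) *
      (T ⟨cs.simple i, Subgroup.subset_closure ⟨i, hi, rfl⟩⟩ - algebraMap R carrier q) = 0

attribute [instance] HeckeJ.ring HeckeJ.alg

/-- `(Mod, φ)` is (a realization of) the induced module `H^{J,a} = H ⊗_{H(W_J)} R^a`
together with `φ = φ^{J,a} : h ↦ h ⊗ 1^a`:  `φ` is surjective and its kernel is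
the `R`-span of the elements `h (T_s - a)`, `s ∈ J`, which is exactly the kernel of
`h ↦ h ⊗ 1^a`. -/
def IsInduced {q : R} (Hk : Hecke cs R q) (J : Set B) (a : R)
    (Mod : Type*) [AddCommGroup Mod] [Module R Mod] (φ : Hk.carrier →ₗ[R] Mod) : Prop :=
  Function.Surjective φ ∧
  LinearMap.ker φ = Submodule.span R
    {h : Hk.carrier | ∃ (g : Hk.carrier) (i : B), i ∈ J ∧
      h = g * (Hk.T (cs.simple i) - algebraMap R Hk.carrier a)}

/-- `C` is the parabolic Kazhdan–Lusztig basis element `C_w^{J,a}` of `H^{J,a}`: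
`C = Σ_{y ∈ W^J, y ≤ w} P^{J,a}_{y,w} T_y^{J,a}` with `P^{J,a}_{w,w} = 1`,
`P^{J,a}_{y,w} ∈ ⊕_{i=0}^{ℓ(w)-ℓ(y)-1} R_i` for `y < w`, and `barJ C = q^{-ℓ(w)} C`,
where `b` is the basis `(T_y^{J,a})_{y ∈ W^J}` of `H^{J,a}` and `barJ` its bar involution.
(The coefficient `P^{J,a}_{y,w}` of `C_w^{J,a}` is `b.repr C y`.) -/
def IsKLEltJ (K : KLRing R) {J : Set B} {Mod : Type*} [AddCommGroup Mod] [Module R Mod]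
    (b : Module.Basis (minReps cs J) R Mod) (barJ : Mod →+ Mod)
    (w : minReps cs J) (C : Mod) : Prop :=
  b.repr C w = 1 ∧
  (∀ y : minReps cs J, b.repr C y ≠ 0 → bruhatLE cs y.1 w.1) ∧
  (∀ y : minReps cs J, bruhatLE cs y.1 w.1 → y ≠ w →
    b.repr C y ∈ K.gradeSum (cs.length w.1 - cs.length y.1)) ∧
  barJ C = K.qinv ^ cs.length w.1 • C


section BarAux

variable (K : KLRing R) (Hk : Hecke cs R K.q)

private lemma ringInverse_eq {A : Type*} [Ring A] {a b : A} (h1 : a * b = 1)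
    (h2 : b * a = 1) : Ring.inverse a = b := by
  have hu : IsUnit a := isUnit_iff_exists.mpr ⟨b, h1, h2⟩
  calc Ring.inverse a = Ring.inverse a * (a * b) := by rw [h1, mul_one]
    _ = (Ring.inverse a * a) * b := by rw [mul_assoc]
    _ = b := by rw [Ring.inverse_mul_cancel _ hu, one_mul]

private lemma hecke_T_one : Hk.T 1 = 1 := by
  have h : (LinearMap.mulLeft R (Hk.T 1) : Hk.carrier →ₗ[R] Hk.carrier) = LinearMap.id :=
    Hk.basis.ext fun w => by
      simp only [LinearMap.mulLeft_apply, LinearMap.id_apply, Hk.basis_eq]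
      rw [Hk.T_mul 1 w (by simp [cs.length_one]), one_mul]
  calc Hk.T 1 = Hk.T 1 * 1 := (mul_one _).symm
    _ = 1 := LinearMap.congr_fun h 1

private lemma hecke_T_sq (i : B) :
    Hk.T (cs.simple i) * Hk.T (cs.simple i)
      = (K.q - 1) • Hk.T (cs.simple i) + K.q • (1 : Hk.carrier) := by
  have h := Hk.T_quad i
  set t := Hk.T (cs.simple i)
  set a := algebraMap R Hk.carrier K.q
  have key : (t + 1) * (t - a) = t * t - (t * a - t + a) := by noncomm_ring
  rw [key] at h
  have h2 : t * t = t * a - t + a := sub_eq_zero.mp h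
  have ha : t * a = K.q • t := by rw [← Algebra.commutes, ← Algebra.smul_def]
  have ha1 : a = K.q • (1 : Hk.carrier) := Algebra.algebraMap_eq_smul_one _
  rw [h2, ha, ha1]
  module

private lemma hecke_qinv_q : K.qinv * K.q = 1 := by rw [mul_comm]; exact K.q_qinv

/-- explicit inverse of `T_s` -/
private noncomputable def iS (i : B) : Hk.carrier :=
  K.qinv • Hk.T (cs.simple i) + (K.qinv - 1) • (1 : Hk.carrier)

private lemma T_mul_iS (i : B) : Hk.T (cs.simple i) * iS K Hk i = 1 := by
  set t := Hk.T (cs.simple i)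
  have h : t * iS K Hk i = (K.qinv * (K.q - 1) + (K.qinv - 1)) • t + (K.qinv * K.q) • 1 := by
    rw [iS, mul_add, mul_smul_comm, mul_smul_comm, mul_one, hecke_T_sq K Hk i]
    module
  rw [h, hecke_qinv_q K, show K.qinv * (K.q - 1) + (K.qinv - 1) = 0 by
    linear_combination hecke_qinv_q K, zero_smul, zero_add, one_smul]

private lemma iS_mul_T (i : B) : iS K Hk i * Hk.T (cs.simple i) = 1 := by
  set t := Hk.T (cs.simple i)
  have h : iS K Hk i * t = (K.qinv * (K.q - 1) + (K.qinv - 1)) • t + (K.qinv * K.q) • 1 := by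
    rw [iS, add_mul, smul_mul_assoc, smul_mul_assoc, one_mul, hecke_T_sq K Hk i]
    module
  rw [h, hecke_qinv_q K, show K.qinv * (K.q - 1) + (K.qinv - 1) = 0 by
    linear_combination hecke_qinv_q K, zero_smul, zero_add, one_smul]

private lemma isUnit_T (w : W) : IsUnit (Hk.T w) := by
  generalize hn : cs.length w = n
  induction n using Nat.strong_induction_on generalizing w with
  | _ n ih =>
    rcases eq_or_ne w 1 with rfl | hw
    · rw [hecke_T_one]; exact isUnit_one
    · obtain ⟨i, hi⟩ := cs.exists_rightDescent_of_ne_one hw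
      have hlen : cs.length (w * cs.simple i) + 1 = cs.length w :=
        cs.isRightDescent_iff.mp hi
      have hmul : Hk.T (w * cs.simple i) * Hk.T (cs.simple i) = Hk.T w := by
        rw [Hk.T_mul _ _ (by
          rw [mul_assoc, cs.simple_mul_simple_self, mul_one, cs.length_simple]; omega)]
        rw [mul_assoc, cs.simple_mul_simple_self, mul_one]
      have h1 : IsUnit (Hk.T (w * cs.simple i)) :=
        ih (cs.length (w * cs.simple i)) (by omega) _ rfl
      have h2 : IsUnit (Hk.T (cs.simple i)) :=
        isUnit_iff_exists.mpr ⟨iS K Hk i, T_mul_iS K Hk i, iS_mul_T K Hk i⟩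
      exact hmul ▸ h1.mul h2

private lemma inverse_T_mul {u v : W}
    (h : cs.length (u * v) = cs.length u + cs.length v) :
    Ring.inverse (Hk.T (u * v)) = Ring.inverse (Hk.T v) * Ring.inverse (Hk.T u) := by
  rw [← Hk.T_mul u v h]
  apply ringInverse_eq
  · rw [mul_assoc, ← mul_assoc (Hk.T v), Ring.mul_inverse_cancel _ (isUnit_T K Hk v),
      one_mul, Ring.mul_inverse_cancel _ (isUnit_T K Hk u)]
  · rw [mul_assoc, ← mul_assoc (Ring.inverse (Hk.T u)),
      Ring.inverse_mul_cancel _ (isUnit_T K Hk u), one_mul,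
      Ring.inverse_mul_cancel _ (isUnit_T K Hk v)]

private lemma inverse_T_simple (i : B) :
    Ring.inverse (Hk.T (cs.simple i)) = iS K Hk i :=
  ringInverse_eq (T_mul_iS K Hk i) (iS_mul_T K Hk i)

private lemma inverse_T_simple_sq (i : B) :
    Ring.inverse (Hk.T (cs.simple i)) * Ring.inverse (Hk.T (cs.simple i))
      = K.qinv • (1 : Hk.carrier) + (K.qinv - 1) • Ring.inverse (Hk.T (cs.simple i)) := by
  rw [inverse_T_simple]
  calc iS K Hk i * iS K Hk i
      = K.qinv • (Hk.T (cs.simple i) * iS K Hk i) + (K.qinv - 1) • (1 * iS K Hk i) := by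
        rw [iS]; rw [add_mul, smul_mul_assoc, smul_mul_assoc]
    _ = K.qinv • (1 : Hk.carrier) + (K.qinv - 1) • iS K Hk i := by
        rw [T_mul_iS, one_mul]

/-- The bar involution as a bare function. -/
private noncomputable def barFun (h : Hk.carrier) : Hk.carrier :=
  (Hk.basis.repr h).sum fun w r => K.conj r • Ring.inverse (Hk.T w⁻¹)

private lemma barFun_add (x y : Hk.carrier) :
    barFun K Hk (x + y) = barFun K Hk x + barFun K Hk y := by
  unfold barFun
  rw [map_add, Finsupp.sum_add_index']
  · intro w; simp
  · intro w r1 r2; rw [map_add, add_smul]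

private noncomputable def barHom : Hk.carrier →+ Hk.carrier :=
  AddMonoidHom.mk' (barFun K Hk) (barFun_add K Hk)

private lemma barHom_apply (x : Hk.carrier) : barHom K Hk x = barFun K Hk x := rfl

private lemma barFun_sum (f : W →₀ R) (g : W → R → Hk.carrier) :
    barFun K Hk (f.sum g) = f.sum fun w r => barFun K Hk (g w r) := by
  rw [← barHom_apply]
  exact map_finsuppSum (barHom K Hk) f g

private lemma barFun_smul (r : R) (x : Hk.carrier) :
    barFun K Hk (r • x) = K.conj r • barFun K Hk x := by
  unfold barFun
  rw [map_smul, Finsupp.sum_smul_index (fun w => by simp), Finsupp.smul_sum]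
  exact Finsupp.sum_congr fun w _ => by rw [map_mul, mul_smul]

private lemma barFun_T (w : W) :
    barFun K Hk (Hk.T w) = Ring.inverse (Hk.T w⁻¹) := by
  unfold barFun
  rw [← Hk.basis_eq, Hk.basis.repr_self, Finsupp.sum_single_index (by simp), map_one, one_smul]

private lemma barFun_one : barFun K Hk 1 = 1 := by
  rw [← hecke_T_one K Hk, barFun_T, inv_one, hecke_T_one K Hk, Ring.inverse_one]

private lemma bar_T_mul_simple (w : W) (i : B) :
    barFun K Hk (Hk.T w * Hk.T (cs.simple i))
      = barFun K Hk (Hk.T w) * barFun K Hk (Hk.T (cs.simple i)) := by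
  rw [barFun_T, barFun_T, cs.inv_simple]
  by_cases hd : cs.IsRightDescent w i
  · -- descending case
    obtain ⟨u, hu, hlu⟩ : ∃ u, w = u * cs.simple i ∧ cs.length u + 1 = cs.length w :=
      ⟨w * cs.simple i, by rw [mul_assoc, cs.simple_mul_simple_self, mul_one],
        cs.isRightDescent_iff.mp hd⟩
    have hladd : cs.length (u * cs.simple i) = cs.length u + cs.length (cs.simple i) := by
      rw [← hu, cs.length_simple]; omega
    have hTw : Hk.T w = Hk.T u * Hk.T (cs.simple i) := by
      rw [Hk.T_mul u _ hladd, ← hu]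
    have hTwTs : Hk.T w * Hk.T (cs.simple i)
        = (K.q - 1) • Hk.T w + K.q • Hk.T u := by
      rw [hTw, mul_assoc, hecke_T_sq K Hk i, mul_add, mul_smul_comm, mul_smul_comm,
        mul_one, ← hTw]
    rw [hTwTs, barFun_add, barFun_smul, barFun_smul, barFun_T, barFun_T]
    have hcq : K.conj (K.q - 1) = K.qinv - 1 := by rw [map_sub, K.conj_q, map_one]
    have hwinv : w⁻¹ = cs.simple i * u⁻¹ := by rw [hu, mul_inv_rev, cs.inv_simple]
    have hlsu : cs.length (cs.simple i * u⁻¹)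
        = cs.length (cs.simple i) + cs.length u⁻¹ := by
      rw [← hwinv, cs.length_inv, cs.length_inv, cs.length_simple]; omega
    have hinvw : Ring.inverse (Hk.T w⁻¹)
        = Ring.inverse (Hk.T u⁻¹) * Ring.inverse (Hk.T (cs.simple i)) := by
      rw [hwinv, inverse_T_mul K Hk hlsu]
    rw [hcq, K.conj_q, hinvw, mul_assoc, inverse_T_simple_sq K Hk i, mul_add,
      mul_smul_comm, mul_smul_comm, mul_one, ← hinvw]
    abel
  · -- ascending case
    have hlen : cs.length (w * cs.simple i) = cs.length w + 1 :=
      cs.not_isRightDescent_iff.mp hd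
    have hadd : cs.length (w * cs.simple i)
        = cs.length w + cs.length (cs.simple i) := by rw [cs.length_simple]; omega
    rw [Hk.T_mul w _ hadd, barFun_T, mul_inv_rev, cs.inv_simple]
    have hlsu : cs.length (cs.simple i * w⁻¹)
        = cs.length (cs.simple i) + cs.length w⁻¹ := by
      have h2 : cs.simple i * w⁻¹ = (w * cs.simple i)⁻¹ := by
        rw [mul_inv_rev, cs.inv_simple]
      rw [h2, cs.length_inv, cs.length_inv, cs.length_simple]; omega
    rw [inverse_T_mul K Hk hlsu]

private lemma repr_sum_eq (h : Hk.carrier) :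
    (Hk.basis.repr h).sum (fun w r => r • Hk.T w) = h := by
  have hrep := Hk.basis.linearCombination_repr h
  rw [Finsupp.linearCombination_apply] at hrep
  simp only [Hk.basis_eq] at hrep
  exact hrep

private lemma bar_mul_simple (h : Hk.carrier) (i : B) :
    barFun K Hk (h * Hk.T (cs.simple i))
      = barFun K Hk h * barFun K Hk (Hk.T (cs.simple i)) := by
  obtain ⟨f, rfl⟩ : ∃ f : W →₀ R, f.sum (fun w r => r • Hk.T w) = h :=
    ⟨Hk.basis.repr h, repr_sum_eq K Hk h⟩
  rw [Finsupp.sum_mul, barFun_sum, barFun_sum, Finsupp.sum_mul]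
  refine Finsupp.sum_congr fun w _ => ?_
  rw [smul_mul_assoc, barFun_smul, barFun_smul, bar_T_mul_simple, smul_mul_assoc]

private lemma bar_mul_T (v : W) (h : Hk.carrier) :
    barFun K Hk (h * Hk.T v) = barFun K Hk h * barFun K Hk (Hk.T v) := by
  generalize hn : cs.length v = n
  induction n using Nat.strong_induction_on generalizing v h with
  | _ n ih =>
    rcases eq_or_ne v 1 with rfl | hv
    · rw [hecke_T_one, mul_one, barFun_one, mul_one]
    · obtain ⟨i, hi⟩ := cs.exists_rightDescent_of_ne_one hv
      obtain ⟨u, hu, hlu⟩ : ∃ u, v = u * cs.simple i ∧ cs.length u + 1 = cs.length v :=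
        ⟨v * cs.simple i, by rw [mul_assoc, cs.simple_mul_simple_self, mul_one],
          cs.isRightDescent_iff.mp hi⟩
      have hladd : cs.length (u * cs.simple i) = cs.length u + cs.length (cs.simple i) := by
        rw [← hu, cs.length_simple]; omega
      have hTv : Hk.T u * Hk.T (cs.simple i) = Hk.T v := by
        rw [Hk.T_mul u _ hladd, ← hu]
      rw [← hTv, ← mul_assoc, bar_mul_simple,
        ih (cs.length u) (by omega) u h rfl, mul_assoc, ← bar_T_mul_simple]

private lemma bar_mul (x y : Hk.carrier) :
    barFun K Hk (x * y) = barFun K Hk x * barFun K Hk y := by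
  obtain ⟨f, rfl⟩ : ∃ f : W →₀ R, f.sum (fun w r => r • Hk.T w) = y :=
    ⟨Hk.basis.repr y, repr_sum_eq K Hk y⟩
  rw [Finsupp.mul_sum, barFun_sum, barFun_sum, Finsupp.mul_sum]
  refine Finsupp.sum_congr fun w _ => ?_
  rw [mul_smul_comm, barFun_smul, barFun_smul, bar_mul_T, mul_smul_comm]

/-- The bar involution as a ring homomorphism. -/
private noncomputable def barRingHom : Hk.carrier →+* Hk.carrier where
  toFun := barFun K Hk
  map_one' := barFun_one K Hk
  map_mul' := bar_mul K Hk
  map_zero' := by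
    show barFun K Hk 0 = 0
    rw [show (0 : Hk.carrier) = (0 : R) • (0 : Hk.carrier) by simp, barFun_smul]
    simp
  map_add' := barFun_add K Hk

private lemma barRingHom_apply (x : Hk.carrier) : barRingHom K Hk x = barFun K Hk x := rfl

private lemma isBar_barRingHom : IsBar K Hk (barRingHom K Hk) := by
  intro r w
  rw [barRingHom_apply, barFun_smul, barFun_T]

private lemma bar_inverse {x : Hk.carrier} (hx : IsUnit x) :
    barFun K Hk (Ring.inverse x) = Ring.inverse (barFun K Hk x) := by
  refine (ringInverse_eq ?_ ?_).symm
  · rw [← bar_mul, Ring.mul_inverse_cancel _ hx, barFun_one]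
  · rw [← bar_mul, Ring.inverse_mul_cancel _ hx, barFun_one]

private lemma inverse_inverse' {x : Hk.carrier} (hx : IsUnit x) :
    Ring.inverse (Ring.inverse x) = x :=
  ringInverse_eq (Ring.inverse_mul_cancel _ hx) (Ring.mul_inverse_cancel _ hx)

private lemma barbar_T (w : W) : barFun K Hk (barFun K Hk (Hk.T w)) = Hk.T w := by
  rw [barFun_T, bar_inverse K Hk (isUnit_T K Hk w⁻¹), barFun_T, inv_inv,
    inverse_inverse' K Hk (isUnit_T K Hk w)]

private lemma barbar (h : Hk.carrier) : barFun K Hk (barFun K Hk h) = h := by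
  obtain ⟨f, rfl⟩ : ∃ f : W →₀ R, f.sum (fun w r => r • Hk.T w) = h :=
    ⟨Hk.basis.repr h, repr_sum_eq K Hk h⟩
  rw [barFun_sum, barFun_sum]
  refine Finsupp.sum_congr fun w _ => ?_
  rw [barFun_smul, barFun_smul, K.conj_conj, barbar_T]

end BarAux


/-- The assignment `Σ r_w T_w ↦ Σ conj(r_w) (T_{w⁻¹})⁻¹` is a well-defined
map from the Hecke algebra `H` to itself (each `T_w` is invertible in `H`), it is a
ring endomorphism, and it is an involution. -/
theorem statement0 (K : KLRing R) (Hk : Hecke cs R K.q) :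
    (∀ w : W, IsUnit (Hk.T w)) ∧
    ∃ bar : Hk.carrier →+* Hk.carrier,
      IsBar K Hk bar ∧
      (∀ h : Hk.carrier, bar (bar h) = h) ∧
      ∀ bar' : Hk.carrier →+* Hk.carrier, IsBar K Hk bar' → bar' = bar := by
  refine ⟨isUnit_T K Hk, barRingHom K Hk, isBar_barRingHom K Hk, barbar K Hk, ?_⟩
  intro bar' hbar'
  ext h
  obtain ⟨f, rfl⟩ : ∃ f : W →₀ R, f.sum (fun w r => r • Hk.T w) = h :=
    ⟨Hk.basis.repr h, repr_sum_eq K Hk h⟩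
  rw [map_finsuppSum, map_finsuppSum]
  refine Finsupp.sum_congr fun w _ => ?_
  rw [hbar' _ w, isBar_barRingHom K Hk _ w]

end KLPaper
end

section
/- Let w ∈ W and suppose D ∈ H* satisfies: (1) D = Σ_{y ≥ w} r_y S_y with r_w = 1 and r_y ∈ ⊕_{i=0}^{ℓ(y)−ℓ(w)−1} R_i for all y > w; and (2) conj(D) = q^{ℓ(w)} D. Then D = D_w, i.e., ⟨D, C_x⟩ = (−1)^{ℓ(w)} δ_{w,x} for all x ∈ W. -/
namespace KLPaper

open Polynomial
open scoped Classical

variable {B : Type*} {W : Type*} [Group W] {M : CoxeterMatrix B}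

variable {R : Type*} [CommRing R]

variable {cs : CoxeterSystem M W}

section Helpers

variable {R : Type*} [CommRing R]

lemma KLRing.exists_rep {ι : Type*} (K : KLRing R) (c : ι → ℤ) (s : Finset ι) (x : R)
    (hx : x ∈ ⨆ i ∈ s, K.grade (c i)) :
    ∃ g : ι → R, (∀ i, g i ∈ K.grade (c i)) ∧ x = ∑ i ∈ s, g i := by
  classical
  induction s using Finset.induction_on generalizing x with
  | empty => exact ⟨0, fun i => zero_mem _, by simpa using hx⟩
  | @insert a s ha ih =>
    rw [← Finset.sup_eq_iSup, Finset.sup_insert] at hx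
    obtain ⟨y, hy, z, hz, hyz⟩ := AddSubgroup.mem_sup.mp hx
    rw [Finset.sup_eq_iSup] at hz
    obtain ⟨g, hg, hzsum⟩ := ih z hz
    refine ⟨Function.update g a y, ?_, ?_⟩
    · intro i
      by_cases h : i = a
      · subst h; simpa using hy
      · simpa [Function.update_of_ne h] using hg i
    · rw [Finset.sum_insert ha, Function.update_self, ← hyz, hzsum]
      congr 1
      refine Finset.sum_congr rfl fun i hi => ?_
      have hia : i ≠ a := by rintro rfl; exact ha hi
      rw [Function.update_of_ne hia]

lemma KLRing.rep_zero {ι κ : Type*} (K : KLRing R) (c : ι → ℤ) (d : κ → ℤ)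
    (S : Finset ι) (T : Finset κ)
    (hdisj : ∀ i ∈ S, ∀ j ∈ T, c i ≠ d j)
    {g : ι → R} {h : κ → R} (hg : ∀ i, g i ∈ K.grade (c i)) (hh : ∀ j, h j ∈ K.grade (d j))
    {x : R} (hxg : x = ∑ i ∈ S, g i) (hxh : x = ∑ j ∈ T, h j) : x = 0 := by
  classical
  letI := K.decomp.chooseDecomposition
  have key : ∀ m : ℤ, (DirectSum.decompose K.grade x m : R) = 0 := by
    intro m
    by_cases hm : ∃ i ∈ S, c i = m
    · obtain ⟨i0, hi0, hci0⟩ := hm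
      rw [hxh, DirectSum.decompose_sum, DFinsupp.finset_sum_apply,
        AddSubmonoidClass.coe_finset_sum]
      refine Finset.sum_eq_zero fun j hj => ?_
      exact DirectSum.decompose_of_mem_ne _ (hh j) (fun e => hdisj i0 hi0 j hj (hci0.trans e.symm))
    · push_neg at hm
      rw [hxg, DirectSum.decompose_sum, DFinsupp.finset_sum_apply,
        AddSubmonoidClass.coe_finset_sum]
      refine Finset.sum_eq_zero fun i hi => ?_
      exact DirectSum.decompose_of_mem_ne _ (hg i) (hm i hi)
  have hsum := DirectSum.sum_support_decompose K.grade x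
  rw [← hsum]
  exact Finset.sum_eq_zero fun i _ => key i

/-- `r` is a sum of homogeneous components of degrees `0, 1, …, n-1`. -/
def KLRing.DegLT (K : KLRing R) (n : ℕ) (r : R) : Prop :=
  ∃ g : ℕ → R, (∀ i : ℕ, g i ∈ K.grade (i : ℤ)) ∧ r = ∑ i ∈ Finset.range n, g i

lemma KLRing.DegLT.of_gradeSum {K : KLRing R} {n : ℕ} {r : R} (h : r ∈ K.gradeSum n) :
    K.DegLT n r :=
  K.exists_rep (fun i : ℕ => (i : ℤ)) (Finset.range n) r h

lemma KLRing.DegLT.zero (K : KLRing R) (n : ℕ) : K.DegLT n 0 :=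
  ⟨0, fun i => zero_mem _, by simp⟩

lemma KLRing.DegLT.of_grade_zero {K : KLRing R} {r : R} (h : r ∈ K.grade 0) :
    K.DegLT 1 r := by
  refine ⟨fun i => if i = 0 then r else 0, ?_, by simp⟩
  intro i
  show (if i = 0 then r else 0) ∈ K.grade (i : ℤ)
  by_cases hi : i = 0
  · subst hi; simpa using h
  · rw [if_neg hi]; exact zero_mem _

lemma KLRing.DegLT.mul {K : KLRing R} {a b n : ℕ} {ra rb : R}
    (ha : K.DegLT a ra) (hb : K.DegLT b rb) (hab : a + b ≤ n + 1) :
    K.DegLT n (ra * rb) := by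
  classical
  obtain ⟨g, hg, rfl⟩ := ha
  obtain ⟨h, hh, rfl⟩ := hb
  refine ⟨fun k => ∑ p ∈ (Finset.range a ×ˢ Finset.range b).filter
      (fun p => p.1 + p.2 = k), g p.1 * h p.2, ?_, ?_⟩
  · intro k
    refine sum_mem fun p hp => ?_
    rw [Finset.mem_filter] at hp
    have hgm := K.grade_mul (p.1 : ℤ) (p.2 : ℤ) _ _ (hg p.1) (hh p.2)
    have hk : ((p.1 : ℤ) + (p.2 : ℤ)) = (k : ℤ) := by exact_mod_cast hp.2
    rwa [hk] at hgm
  · rw [Finset.sum_mul_sum, ← Finset.sum_product']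
    refine (Finset.sum_fiberwise_of_maps_to ?_ _).symm
    intro p hp
    simp only [Finset.mem_product, Finset.mem_range] at hp
    rw [Finset.mem_range]
    omega

lemma KLRing.DegLT.sum {ι : Type*} {K : KLRing R} {n : ℕ} (s : Finset ι) (f : ι → R)
    (h : ∀ y ∈ s, K.DegLT n (f y)) : K.DegLT n (∑ y ∈ s, f y) := by
  classical
  choose g hg1 hg2 using h
  refine ⟨fun i => ∑ y ∈ s.attach, g y y.2 i,
    fun i => sum_mem fun y _ => hg1 y y.2 i, ?_⟩
  rw [← Finset.sum_attach s f, Finset.sum_comm]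
  exact Finset.sum_congr rfl fun y _ => hg2 y y.2

lemma KLRing.neg_one_pow_mem (K : KLRing R) (m : ℕ) : ((-1 : R)) ^ m ∈ K.grade 0 := by
  rcases Nat.even_or_odd m with h | h
  · rw [h.neg_one_pow]; exact K.one_mem
  · rw [h.neg_one_pow]; exact neg_mem K.one_mem

lemma KLRing.conj_qinv (K : KLRing R) : K.conj K.qinv = K.q := by
  rw [← K.conj_q, K.conj_conj]

lemma KLRing.qinv_mem (K : KLRing R) : K.qinv ∈ K.grade (-2) := by
  have := K.conj_grade 2 K.q K.q_mem
  rwa [K.conj_q] at this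

lemma KLRing.qinv_pow_mem (K : KLRing R) (n : ℕ) : K.qinv ^ n ∈ K.grade (-(2 * n)) := by
  induction n with
  | zero => simpa using K.one_mem
  | succ m ih =>
    have := K.grade_mul _ _ _ _ ih K.qinv_mem
    rw [← pow_succ] at this
    rwa [show (-(2 * (m : ℤ)) + -2) = -(2 * ((m + 1 : ℕ) : ℤ)) by push_cast; ring] at this

lemma bruhatLE_length {B : Type*} {W : Type*} [Group W] {M : CoxeterMatrix B}
    {cs : CoxeterSystem M W} {x y : W} (h : bruhatLE cs x y) :
    x = y ∨ cs.length x < cs.length y := by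
  induction h with
  | refl => exact Or.inl rfl
  | tail _ hstep ih =>
    right
    rcases ih with rfl | hlt
    · exact hstep.2
    · exact hlt.trans hstep.2

lemma bruhatLE_antisymm {B : Type*} {W : Type*} [Group W] {M : CoxeterMatrix B}
    {cs : CoxeterSystem M W} {x y : W} (h1 : bruhatLE cs x y) (h2 : bruhatLE cs y x) :
    x = y := by
  rcases bruhatLE_length h1 with h | h
  · exact h
  · rcases bruhatLE_length h2 with h' | h'
    · exact h'.symm
    · omega

end Helpers

/-- if `D ∈ H* = Hom_R(H, R)` satisfies `D = Σ_{y ≥ w} r_y S_y` with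
`r_w = 1` and `r_y ∈ ⊕_{i=0}^{ℓ(y)-ℓ(w)-1} R_i` for `y > w`, and `conj D = q^{ℓ(w)} D`,
then `D = D_w`, i.e. `⟨D, C_x⟩ = (-1)^{ℓ(w)} δ_{w,x}` for all `x ∈ W`.
Here the coefficient `r_y` of `D = Σ r_y S_y` is `(-1)^{ℓ(y)} ⟨D, T_y⟩` (since
`⟨S_y, T_x⟩ = (-1)^{ℓ(y)} δ_{y,x}`), and the bar involution of `H*` is given by
`⟨conj D, h⟩ = conj ⟨D, bar h⟩`. -/
theorem statement5 (K : KLRing R) (Hk : Hecke cs R K.q)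
    (bar : Hk.carrier →+* Hk.carrier) (hbar : IsBar K Hk bar)
    (C : W → Hk.carrier) (hC : ∀ w : W, IsKLElt K Hk bar w (C w))
    (w : W) (D : Hk.carrier →ₗ[R] R)
    (hsupp : ∀ y : W, D (Hk.T y) ≠ 0 → bruhatLE cs w y)
    (hw : (-1 : R) ^ cs.length w * D (Hk.T w) = 1)
    (hgr : ∀ y : W, bruhatLE cs w y → y ≠ w →
      (-1 : R) ^ cs.length y * D (Hk.T y) ∈ K.gradeSum (cs.length y - cs.length w))
    (hdual : ∀ h : Hk.carrier, K.conj (D (bar h)) = K.q ^ cs.length w * D h) :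
    ∀ x : W, D (C x) = if x = w then (-1 : R) ^ cs.length w else 0 := by
  classical
  have hsgn : ∀ m : ℕ, ((-1 : R)) ^ m * ((-1 : R)) ^ m = 1 := by
    intro m; rw [← mul_pow]; norm_num
  have hDTw : D (Hk.T w) = (-1 : R) ^ cs.length w := by
    linear_combination ((-1 : R) ^ cs.length w) * hw - (D (Hk.T w)) * hsgn (cs.length w)
  have expand : ∀ z : Hk.carrier,
      D z = ∑ y ∈ (Hk.basis.repr z).support, Hk.basis.repr z y * D (Hk.T y) := by
    intro z
    conv_lhs => rw [← Hk.basis.linearCombination_repr z]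
    rw [Finsupp.linearCombination_apply, Finsupp.sum, map_sum]
    exact Finset.sum_congr rfl fun y _ => by rw [map_smul, Hk.basis_eq, smul_eq_mul]
  intro x
  obtain ⟨hPxx, hsuppx, hgrx, hbarx⟩ := hC x
  by_cases hwx : bruhatLE cs w x
  · by_cases hxw : x = w
    · subst hxw
      rw [if_pos rfl, expand (C x)]
      have h1 : ∀ y ∈ (Hk.basis.repr (C x)).support, y ≠ x →
          Hk.basis.repr (C x) y * D (Hk.T y) = 0 := by
        intro y hy hyx
        by_cases hD : D (Hk.T y) = 0
        · rw [hD, mul_zero]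
        · exact absurd (bruhatLE_antisymm
            (hsuppx y (Finsupp.mem_support_iff.mp hy)) (hsupp y hD)) hyx
      have h2 : x ∉ (Hk.basis.repr (C x)).support →
          Hk.basis.repr (C x) x * D (Hk.T x) = 0 := by
        intro hx
        rw [Finsupp.notMem_support_iff.mp hx, zero_mul]
      rw [Finset.sum_eq_single x h1 h2, hPxx, one_mul, hDTw]
    · rw [if_neg hxw]
      have hlen : cs.length w < cs.length x := by
        rcases bruhatLE_length hwx with h | h
        · exact absurd h.symm hxw
        · exact h
      have hn1 : 1 ≤ cs.length x - cs.length w := by omega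
      have hdeg : K.DegLT (cs.length x - cs.length w) (D (C x)) := by
        rw [expand (C x)]
        refine KLRing.DegLT.sum _ _ fun y hy => ?_
        by_cases hD : D (Hk.T y) = 0
        · rw [hD, mul_zero]; exact KLRing.DegLT.zero K _
        have hwy : bruhatLE cs w y := hsupp y hD
        have hyx : bruhatLE cs y x := hsuppx y (Finsupp.mem_support_iff.mp hy)
        have hterm : Hk.basis.repr (C x) y * D (Hk.T y) =
            (-1 : R) ^ cs.length y *
              (Hk.basis.repr (C x) y * ((-1 : R) ^ cs.length y * D (Hk.T y))) := by
          linear_combination (-(Hk.basis.repr (C x) y * D (Hk.T y))) * hsgn (cs.length y)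
        rw [hterm]
        refine KLRing.DegLT.mul (b := cs.length x - cs.length w)
          (KLRing.DegLT.of_grade_zero (K.neg_one_pow_mem _)) ?_ (by omega)
        by_cases hyw : y = w
        · subst hyw
          rw [hw, mul_one]
          exact KLRing.DegLT.of_gradeSum (hgrx y hwx (fun e => hxw e.symm))
        · by_cases hyx' : y = x
          · subst hyx'
            rw [hPxx, one_mul]
            exact KLRing.DegLT.of_gradeSum (hgr y hwy hyw)
          · have h1 : cs.length w < cs.length y := by
              rcases bruhatLE_length hwy with h | h
              · exact absurd h.symm hyw
              · exact h
            have h2 : cs.length y < cs.length x := by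
              rcases bruhatLE_length hyx with h | h
              · exact absurd h hyx'
              · exact h
            exact KLRing.DegLT.mul (KLRing.DegLT.of_gradeSum (hgrx y hyx hyx'))
              (KLRing.DegLT.of_gradeSum (hgr y hwy hyw)) (by omega)
      have hE : K.q ^ cs.length x * K.conj (D (C x)) = K.q ^ cs.length w * D (C x) := by
        have h0 := hdual (C x)
        rw [hbarx, map_smul, smul_eq_mul, map_mul, map_pow, K.conj_qinv] at h0
        exact h0
      have hq1 : ∀ m : ℕ, K.qinv ^ m * K.q ^ m = 1 := by
        intro m; rw [← mul_pow, mul_comm K.qinv K.q, K.q_qinv, one_pow]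
      have hconjα : K.conj (D (C x)) = K.qinv ^ (cs.length x - cs.length w) * D (C x) := by
        calc K.conj (D (C x))
            = (K.qinv ^ cs.length x * K.q ^ cs.length x) * K.conj (D (C x)) := by
              rw [hq1, one_mul]
          _ = K.qinv ^ cs.length x * (K.q ^ cs.length x * K.conj (D (C x))) := by ring
          _ = K.qinv ^ cs.length x * (K.q ^ cs.length w * D (C x)) := by rw [hE]
          _ = K.qinv ^ (cs.length x - cs.length w) *
                ((K.qinv ^ cs.length w * K.q ^ cs.length w) * D (C x)) := by
              have hpow : K.qinv ^ cs.length x =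
                  K.qinv ^ (cs.length x - cs.length w) * K.qinv ^ cs.length w := by
                rw [← pow_add]; congr 1; omega
              rw [hpow]; ring
          _ = K.qinv ^ (cs.length x - cs.length w) * D (C x) := by rw [hq1, one_mul]
      obtain ⟨g, hg, hrep⟩ := hdeg
      have hrep1 : K.conj (D (C x)) =
          ∑ i ∈ Finset.range (cs.length x - cs.length w), K.conj (g i) := by
        rw [hrep, map_sum]
      have hrep2 : K.conj (D (C x)) =
          ∑ i ∈ Finset.range (cs.length x - cs.length w),
            K.qinv ^ (cs.length x - cs.length w) * g i := by
        rw [hconjα, hrep, Finset.mul_sum]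
      have hzero : K.conj (D (C x)) = 0 := by
        refine K.rep_zero (fun i : ℕ => -(i : ℤ))
          (fun i : ℕ => (i : ℤ) - 2 * (cs.length x - cs.length w : ℕ))
          (Finset.range (cs.length x - cs.length w))
          (Finset.range (cs.length x - cs.length w)) ?_
          (fun i => K.conj_grade _ _ (hg i)) (fun i => ?_) hrep1 hrep2
        · intro i hi j hj
          rw [Finset.mem_range] at hi hj
          omega
        · have hq := K.qinv_pow_mem (cs.length x - cs.length w)
          have hm := K.grade_mul _ _ _ _ hq (hg i)
          rwa [show (-(2 * ((cs.length x - cs.length w : ℕ) : ℤ)) + (i : ℤ)) =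
            ((i : ℤ) - 2 * (cs.length x - cs.length w : ℕ)) by ring] at hm
      rw [← K.conj_conj (D (C x)), hzero, map_zero]
  · have hxw : x ≠ w := by rintro rfl; exact hwx Relation.ReflTransGen.refl
    rw [if_neg hxw, expand (C x)]
    refine Finset.sum_eq_zero fun y hy => ?_
    by_cases hD : D (Hk.T y) = 0
    · rw [hD, mul_zero]
    · exact absurd (Relation.ReflTransGen.trans (hsupp y hD)
        (hsuppx y (Finsupp.mem_support_iff.mp hy))) hwx

end KLPaper
end
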